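/- Let p_i^∥ ≪ q_i and p_i^⊥ ⊥ q_i be probability measures on measure spaces X_i (i = 1,2), and suppose there are stochastic maps interconverting (p₁^∥, q₁) with (p₂^∥, q₂). Then for every λ ∈ [0,1] there are stochastic maps interconverting (λp₁^∥ + (1-λ)p₁^⊥, q₁) with (λp₂^∥ + (1-λ)p₂^⊥, q₂). -/

import Mathlib

open MeasureTheory ProbabilityTheory
open scoped ENNReal

private lemma aux_kernel {X Y : Type*} [MeasurableSpace X] [MeasurableSpace Y]
    (ppar pperp q : Measure X) (νperp : Measure Y)
    [IsProbabilityMeasure pperp] [IsProbabilityMeasure νperp]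
    (hac : ppar ≪ q) (hsing : pperp ⟂ₘ q)
    (T : Kernel X Y) [IsMarkovKernel T] :
    ∃ T' : Kernel X Y, IsMarkovKernel T' ∧ ppar.bind T' = ppar.bind T ∧
      q.bind T' = q.bind T ∧ pperp.bind T' = νperp := by
  classical
  obtain ⟨s, hsm, hps, hqs⟩ := hsing
  refine ⟨Kernel.piecewise hsm T (Kernel.const X νperp), inferInstance, ?_, ?_, ?_⟩
  · have hpars : ppar sᶜ = 0 := hac hqs
    ext1 t ht
    rw [Measure.bind_apply ht (Kernel.measurable _).aemeasurable, Measure.bind_apply ht (Kernel.measurable _).aemeasurable]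
    refine lintegral_congr_ae ?_
    filter_upwards [measure_eq_zero_iff_ae_notMem.mp hpars] with x hx
    simp [Kernel.piecewise_apply', not_not.mp hx]
  · ext1 t ht
    rw [Measure.bind_apply ht (Kernel.measurable _).aemeasurable, Measure.bind_apply ht (Kernel.measurable _).aemeasurable]
    refine lintegral_congr_ae ?_
    filter_upwards [measure_eq_zero_iff_ae_notMem.mp hqs] with x hx
    simp [Kernel.piecewise_apply', not_not.mp hx]
  · ext1 t ht
    rw [Measure.bind_apply ht (Kernel.measurable _).aemeasurable]
    have : ∫⁻ x, (Kernel.piecewise hsm T (Kernel.const X νperp)) x t ∂pperp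
        = ∫⁻ _, νperp t ∂pperp := by
      refine lintegral_congr_ae ?_
      filter_upwards [measure_eq_zero_iff_ae_notMem.mp hps] with x hx
      simp [Kernel.piecewise_apply', hx]
    rw [this, lintegral_const, measure_univ, mul_one]

private lemma Kernel.bind_add {X Y : Type*} [MeasurableSpace X] [MeasurableSpace Y]
    (μ ν : Measure X) (κ : Kernel X Y) : (μ + ν).bind κ = μ.bind κ + ν.bind κ := by
  ext1 t ht
  rw [Measure.add_apply, Measure.bind_apply ht (Kernel.measurable _).aemeasurable,
    Measure.bind_apply ht (Kernel.measurable _).aemeasurable,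
    Measure.bind_apply ht (Kernel.measurable _).aemeasurable, lintegral_add_measure]

theorem interconvertible_of_lebesgue_mixture {X₁ X₂ : Type*}
    [MeasurableSpace X₁] [MeasurableSpace X₂]
    (ppar₁ pperp₁ q₁ : Measure X₁) (ppar₂ pperp₂ q₂ : Measure X₂)
    [IsProbabilityMeasure ppar₁] [IsProbabilityMeasure pperp₁] [IsProbabilityMeasure q₁]
    [IsProbabilityMeasure ppar₂] [IsProbabilityMeasure pperp₂] [IsProbabilityMeasure q₂]
    (hac₁ : ppar₁ ≪ q₁) (hsing₁ : pperp₁ ⟂ₘ q₁)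
    (hac₂ : ppar₂ ≪ q₂) (hsing₂ : pperp₂ ⟂ₘ q₂)
    (h : ∃ (T : Kernel X₁ X₂) (R : Kernel X₂ X₁),
      IsMarkovKernel T ∧ IsMarkovKernel R ∧
      ppar₁.bind T = ppar₂ ∧ q₁.bind T = q₂ ∧
      ppar₂.bind R = ppar₁ ∧ q₂.bind R = q₁)
    (l : ℝ) (hl0 : 0 ≤ l) (hl1 : l ≤ 1) :
    ∃ (T : Kernel X₁ X₂) (R : Kernel X₂ X₁),
      IsMarkovKernel T ∧ IsMarkovKernel R ∧
      (ENNReal.ofReal l • ppar₁ + ENNReal.ofReal (1 - l) • pperp₁).bind T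
        = ENNReal.ofReal l • ppar₂ + ENNReal.ofReal (1 - l) • pperp₂ ∧
      q₁.bind T = q₂ ∧
      (ENNReal.ofReal l • ppar₂ + ENNReal.ofReal (1 - l) • pperp₂).bind R
        = ENNReal.ofReal l • ppar₁ + ENNReal.ofReal (1 - l) • pperp₁ ∧
      q₂.bind R = q₁ := by
  obtain ⟨T, R, hT, hR, hT1, hT2, hR1, hR2⟩ := h
  obtain ⟨T', hT', hT'1, hT'2, hT'3⟩ := aux_kernel ppar₁ pperp₁ q₁ pperp₂ hac₁ hsing₁ T
  obtain ⟨R', hR', hR'1, hR'2, hR'3⟩ := aux_kernel ppar₂ pperp₂ q₂ pperp₁ hac₂ hsing₂ R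
  refine ⟨T', R', hT', hR', ?_, ?_, ?_, ?_⟩
  · rw [Kernel.bind_add, Measure.bind_smul, Measure.bind_smul, hT'1, hT1, hT'3]
  · rw [hT'2, hT2]
  · rw [Kernel.bind_add, Measure.bind_smul, Measure.bind_smul, hR'1, hR1, hR'3]
  · rw [hR'2, hR2]
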